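/- Let (y_k)_{k≥0} be a strictly decreasing sequence of positive real numbers converging to 0, let η > 1, and assume there exists ρ ≥ 1 with (1/ρ) · y_k^η ≤ y_k − y_{k+1} ≤ ρ · y_k^η for all k ≥ 0. Then lim_{k→∞} (ln k) / (−ln(y_k − y_{k+1})) = (η−1)/η. -/

import Mathlib

open Filter Topology

/-- MVT bound for `t ↦ t^(-β)` on `[b,a]`. -/
lemma mvt_rpow_aux {a b β : ℝ} (hb : 0 < b) (hba : b < a) (hβ : 0 < β) :
    β * (a - b) * a ^ (-β - 1) ≤ b ^ (-β) - a ^ (-β) ∧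
    b ^ (-β) - a ^ (-β) ≤ β * (a - b) * b ^ (-β - 1) := by
  obtain ⟨c, hc, heq⟩ := exists_hasDerivAt_eq_slope (fun t => t ^ (-β))
    (fun t => -β * t ^ (-β - 1)) hba
    (fun t ht => (Real.continuousAt_rpow_const t (-β)
      (Or.inl (ne_of_gt (lt_of_lt_of_le hb ht.1)))).continuousWithinAt)
    (fun x hx => Real.hasDerivAt_rpow_const (Or.inl (ne_of_gt (hb.trans hx.1))))
  have hc0 : 0 < c := hb.trans hc.1
  have hab : a - b ≠ 0 := by linarith [hba]
  have heq' : a ^ (-β) - b ^ (-β) = -β * c ^ (-β - 1) * (a - b) := by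
    rw [eq_comm, div_eq_iff hab] at heq
    linarith [heq]
  have key : b ^ (-β) - a ^ (-β) = β * (a - b) * c ^ (-β - 1) := by
    linear_combination -heq'
  have h1 : a ^ (-β - 1) ≤ c ^ (-β - 1) :=
    Real.rpow_le_rpow_of_nonpos hc0 hc.2.le (by linarith)
  have h2 : c ^ (-β - 1) ≤ b ^ (-β - 1) :=
    Real.rpow_le_rpow_of_nonpos hb hc.1.le (by linarith)
  have hpos : 0 < β * (a - b) := by nlinarith
  constructor
  · rw [key]; exact mul_le_mul_of_nonneg_left h1 hpos.le
  · rw [key]; exact mul_le_mul_of_nonneg_left h2 hpos.le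

theorem cahen_formula
    (ys : ℕ → ℝ) (η ρ : ℝ)
    (hpos : ∀ k, 0 < ys k) (hanti : StrictAnti ys)
    (hlim : Filter.Tendsto ys Filter.atTop (nhds 0))
    (hη : 1 < η) (hρ : 1 ≤ ρ)
    (hcomp : ∀ k : ℕ,
      (1/ρ) * ys k ^ η ≤ ys k - ys (k+1) ∧
      ys k - ys (k+1) ≤ ρ * ys k ^ η) :
    Filter.Tendsto
      (fun k : ℕ => Real.log (k : ℝ) / (-Real.log (ys k - ys (k+1))))
      Filter.atTop (nhds ((η - 1) / η)) := by
  have hβ : 0 < η - 1 := by linarith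
  set β := η - 1 with hβdef
  have hρ0 : 0 < ρ := lt_of_lt_of_le one_pos hρ
  set d : ℕ → ℝ := fun k => ys k - ys (k+1) with hddef
  have hd : ∀ k, 0 < d k := fun k => sub_pos.mpr (hanti (Nat.lt_succ_self k))
  set z : ℕ → ℝ := fun k => ys k ^ (-β) with hzdef
  have hz0 : ∀ k, 0 < z k := fun k => Real.rpow_pos_of_pos (hpos k) _
  have hβη : -β - 1 = -η := by rw [hβdef]; ring
  -- MVT bounds on z increments
  have hmvt : ∀ k, β * d k * (ys k) ^ (-η) ≤ z (k+1) - z k ∧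
      z (k+1) - z k ≤ β * d k * (ys (k+1)) ^ (-η) := by
    intro k
    have h := mvt_rpow_aux (hpos (k+1)) (hanti (Nat.lt_succ_self k)) hβ
    rw [hβη] at h
    exact ⟨h.1, h.2⟩
  have hmul : ∀ k, ys k ^ η * ys k ^ (-η) = 1 := by
    intro k
    rw [← Real.rpow_add (hpos k)]
    simp
  -- lower increment bound
  have hlow : ∀ k, β / ρ ≤ z (k+1) - z k := by
    intro k
    have h1 := (hmvt k).1
    have h2 := (hcomp k).1
    have hynη : (0:ℝ) < ys k ^ (-η) := Real.rpow_pos_of_pos (hpos k) _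
    have e : β * ((1/ρ) * ys k ^ η) * ys k ^ (-η) = β / ρ := by
      have h := hmul k
      field_simp
      linear_combination h
    have : β * ((1/ρ) * ys k ^ η) * ys k ^ (-η) ≤ β * d k * ys k ^ (-η) :=
      mul_le_mul_of_nonneg_right (mul_le_mul_of_nonneg_left h2 hβ.le) hynη.le
    exact e ▸ (this.trans h1)
  -- telescoping lower bound
  have hzlin : ∀ n : ℕ, z 0 + (β/ρ) * n ≤ z n := by
    intro n
    induction n with
    | zero => simp
    | succ n ih =>
      have := hlow n
      push_cast
      push_cast at ih
      linarith
  -- eventually ys k ^ β small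
  have hsmall : ∀ᶠ k in atTop, ys k ^ β < 1/(2*ρ) := by
    have h1 : Tendsto (fun k => ys k ^ β) atTop (nhds 0) := by
      have := hlim.rpow_const (p := β) (Or.inr hβ.le)
      rwa [Real.zero_rpow (ne_of_gt hβ)] at this
    exact h1.eventually_lt_const (by positivity)
  obtain ⟨K, hK⟩ := eventually_atTop.mp hsmall
  have hhalf : ∀ k ≥ K, ys k / 2 ≤ ys (k+1) := by
    intro k hk
    have h2 := (hcomp k).2
    have hyη : ys k ^ η = ys k ^ β * ys k := by
      rw [show η = β + 1 by rw [hβdef]; ring, Real.rpow_add (hpos k), Real.rpow_one]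
    have hb : ρ * ys k ^ η ≤ ys k / 2 := by
      have h3 : ρ * ys k ^ β ≤ ρ * (1/(2*ρ)) :=
        mul_le_mul_of_nonneg_left (hK k hk).le hρ0.le
      have h4 : ρ * (1/(2*ρ)) = 1/2 := by field_simp
      calc ρ * ys k ^ η = ρ * ys k ^ β * ys k := by rw [hyη]; ring
        _ ≤ (1/2) * ys k := by
            apply mul_le_mul_of_nonneg_right _ (hpos k).le
            rw [← h4]; exact h3
        _ = ys k / 2 := by ring
    have : d k ≤ ys k / 2 := le_trans h2 hb
    simp only [hddef] at this
    linarith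
  -- upper increment bound
  set C := β * ρ * 2 ^ (η : ℝ) with hCdef
  have h2η : (0:ℝ) < (2:ℝ) ^ (η:ℝ) := Real.rpow_pos_of_pos (by norm_num) _
  have hC : 0 < C := by positivity
  have hub : ∀ k ≥ K, z (k+1) - z k ≤ C := by
    intro k hk
    have h1 := (hmvt k).2
    have h2 := (hcomp k).2
    have hyhalf : (0:ℝ) < ys k / 2 := by have := hpos k; linarith
    have hmono : ys (k+1) ^ (-η) ≤ (ys k / 2) ^ (-η) :=
      Real.rpow_le_rpow_of_nonpos hyhalf (hhalf k hk) (by linarith)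
    have hcalc : (ys k / 2) ^ (-η) = 2 ^ (η:ℝ) * ys k ^ (-η) := by
      rw [Real.div_rpow (hpos k).le (by norm_num : (0:ℝ) ≤ 2),
        Real.rpow_neg (hpos k).le, Real.rpow_neg (by norm_num : (0:ℝ) ≤ 2)]
      field_simp
    have hynη : (0:ℝ) < ys k ^ (-η) := Real.rpow_pos_of_pos (hpos k) _
    have hstep : β * d k * ys (k+1) ^ (-η) ≤ β * (ρ * ys k ^ η) * (2 ^ (η:ℝ) * ys k ^ (-η)) := by
      have hdk := hd k
      have hA : β * d k * ys (k+1) ^ (-η) ≤ β * d k * ((ys k / 2) ^ (-η)) :=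
        mul_le_mul_of_nonneg_left hmono (by positivity)
      have hB : β * d k * ((ys k / 2) ^ (-η)) ≤ β * (ρ * ys k ^ η) * ((ys k / 2) ^ (-η)) := by
        apply mul_le_mul_of_nonneg_right _ (by positivity)
        exact mul_le_mul_of_nonneg_left h2 hβ.le
      calc β * d k * ys (k+1) ^ (-η) ≤ β * (ρ * ys k ^ η) * ((ys k / 2) ^ (-η)) :=
            le_trans hA hB
        _ = β * (ρ * ys k ^ η) * (2 ^ (η:ℝ) * ys k ^ (-η)) := by rw [hcalc]
    have hfin : β * (ρ * ys k ^ η) * (2 ^ (η:ℝ) * ys k ^ (-η)) = C := by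
      have h := hmul k
      rw [hCdef]
      linear_combination (β * ρ * 2 ^ (η:ℝ)) * h
    linarith [h1, hstep, hfin ▸ hstep]
  have hupt : ∀ m : ℕ, z (K + m) ≤ z K + C * m := by
    intro m
    induction m with
    | zero => simp
    | succ m ih =>
      have := hub (K + m) (Nat.le_add_right K m)
      push_cast
      push_cast at ih
      have heq : K + (m + 1) = (K + m) + 1 := by ring
      rw [heq]
      linarith
  -- linear bounds on z
  set c2 := z K + C with hc2def
  have hc2 : 0 < c2 := by have := hz0 K; positivity
  have hbound : ∀ n : ℕ, max K 1 ≤ n → (β/ρ) * n ≤ z n ∧ z n ≤ c2 * n := by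
    intro n hn
    have hnK : K ≤ n := le_trans (le_max_left _ _) hn
    have hn1 : 1 ≤ n := le_trans (le_max_right _ _) hn
    have hn1' : (1:ℝ) ≤ (n:ℝ) := by exact_mod_cast hn1
    constructor
    · have := hzlin n; have := hz0 0; linarith
    · have he : K + (n - K) = n := Nat.add_sub_cancel' hnK
      have h := hupt (n - K)
      rw [he] at h
      have hle : ((n - K : ℕ):ℝ) ≤ (n:ℝ) := by exact_mod_cast Nat.sub_le n K
      have : z n ≤ z K + C * n := by nlinarith
      have hzK : z K ≤ z K * n := le_mul_of_one_le_right (hz0 K).le hn1'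
      rw [hc2def]
      nlinarith
  -- log bounds on -log d
  set A := Real.log (β/ρ) with hAdef
  set B := Real.log c2 with hBdef
  have hlogd : ∀ n : ℕ, max (max K 1) 1 ≤ n →
      (η/β) * (A + Real.log n) - Real.log ρ ≤ -Real.log (d n) ∧
      -Real.log (d n) ≤ (η/β) * (B + Real.log n) + Real.log ρ := by
    intro n hn
    have hn1 : 1 ≤ n := le_trans (le_max_right _ _) hn
    have hnM : max K 1 ≤ n := le_trans (le_max_left _ _) hn
    have hn0 : (0:ℝ) < (n:ℝ) := by exact_mod_cast hn1
    obtain ⟨hb1, hb2⟩ := hbound n hnM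
    have hzpos := hz0 n
    have hβρ : (0:ℝ) < β/ρ := by positivity
    -- log z n bounds
    have hlz1 : A + Real.log n ≤ Real.log (z n) := by
      have := Real.log_le_log (mul_pos hβρ hn0) hb1
      rwa [Real.log_mul (ne_of_gt hβρ) (ne_of_gt hn0)] at this
    have hlz2 : Real.log (z n) ≤ B + Real.log n := by
      have := Real.log_le_log hzpos hb2
      rwa [Real.log_mul (ne_of_gt hc2) (ne_of_gt hn0)] at this
    -- log z n = -β * log ys n
    have hlzy : Real.log (z n) = -β * Real.log (ys n) := by
      rw [hzdef]; exact Real.log_rpow (hpos n) _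
    -- log d bounds
    have hld1 : -Real.log ρ + η * Real.log (ys n) ≤ Real.log (d n) := by
      have := Real.log_le_log (mul_pos (by positivity) (Real.rpow_pos_of_pos (hpos n) η)) (hcomp n).1
      rwa [Real.log_mul (by positivity) (ne_of_gt (Real.rpow_pos_of_pos (hpos n) η)),
        Real.log_rpow (hpos n), one_div, Real.log_inv] at this
    have hld2 : Real.log (d n) ≤ Real.log ρ + η * Real.log (ys n) := by
      have := Real.log_le_log (hd n) (hcomp n).2
      rwa [Real.log_mul (ne_of_gt hρ0) (ne_of_gt (Real.rpow_pos_of_pos (hpos n) η)),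
        Real.log_rpow (hpos n)] at this
    have hηβ : (0:ℝ) < η/β := by positivity
    have key1 : (η/β) * (A + Real.log n) ≤ (η/β) * Real.log (z n) :=
      mul_le_mul_of_nonneg_left hlz1 hηβ.le
    have key2 : (η/β) * Real.log (z n) ≤ (η/β) * (B + Real.log n) :=
      mul_le_mul_of_nonneg_left hlz2 hηβ.le
    have hexpand : (η/β) * Real.log (z n) = -(η * Real.log (ys n)) := by
      rw [hlzy]; field_simp
    constructor
    · rw [hexpand] at key1; linarith
    · rw [hexpand] at key2; linarith
  -- tendsto of -log d n / log n
  have hloginv : Tendsto (fun n : ℕ => (Real.log n)⁻¹) atTop (nhds 0) := by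
    have : Tendsto (fun n : ℕ => Real.log n) atTop atTop :=
      Real.tendsto_log_atTop.comp tendsto_natCast_atTop_atTop
    exact this.inv_tendsto_atTop
  have hlogn : ∀ᶠ n : ℕ in atTop, (0:ℝ) < Real.log n := by
    have : Tendsto (fun n : ℕ => Real.log n) atTop atTop :=
      Real.tendsto_log_atTop.comp tendsto_natCast_atTop_atTop
    exact this.eventually_gt_atTop 0
  have hg : Tendsto (fun n : ℕ => -Real.log (d n) / Real.log n) atTop (nhds (η/β)) := by
    have hLB : Tendsto (fun n : ℕ => η/β + ((η/β) * A - Real.log ρ) * (Real.log n)⁻¹)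
        atTop (nhds (η/β)) := by
      have h := (hloginv.const_mul ((η/β) * A - Real.log ρ)).const_add (η/β)
      rw [mul_zero, add_zero] at h
      exact h
    have hUB : Tendsto (fun n : ℕ => η/β + ((η/β) * B + Real.log ρ) * (Real.log n)⁻¹)
        atTop (nhds (η/β)) := by
      have h := (hloginv.const_mul ((η/β) * B + Real.log ρ)).const_add (η/β)
      rw [mul_zero, add_zero] at h
      exact h
    apply tendsto_of_tendsto_of_tendsto_of_le_of_le' hLB hUB
    · filter_upwards [eventually_atTop.mpr ⟨max (max K 1) 1, fun n hn => hlogd n hn⟩, hlogn]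
        with n hb hl
      have h := hb.1
      have hl' : Real.log n ≠ 0 := ne_of_gt hl
      have e1 : (η/β + ((η/β) * A - Real.log ρ) * (Real.log n)⁻¹) * Real.log n
          = (η/β) * (A + Real.log n) - Real.log ρ := by
        field_simp
        ring
      rw [le_div_iff₀ hl, e1]
      exact h
    · filter_upwards [eventually_atTop.mpr ⟨max (max K 1) 1, fun n hn => hlogd n hn⟩, hlogn]
        with n hb hl
      have h := hb.2
      have hl' : Real.log n ≠ 0 := ne_of_gt hl
      have e1 : (η/β + ((η/β) * B + Real.log ρ) * (Real.log n)⁻¹) * Real.log n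
          = (η/β) * (B + Real.log n) + Real.log ρ := by
        field_simp
        ring
      rw [div_le_iff₀ hl, e1]
      exact h
  -- conclusion
  have hfin : Tendsto (fun n : ℕ => (-Real.log (d n) / Real.log n)⁻¹) atTop
      (nhds ((η/β)⁻¹)) := hg.inv₀ (by positivity)
  have heq : (fun n : ℕ => (-Real.log (d n) / Real.log n)⁻¹) =
      fun n : ℕ => Real.log n / (-Real.log (d n)) := by
    funext n; rw [inv_div]
  rw [heq] at hfin
  have : (η/β)⁻¹ = (η - 1)/η := by
    rw [inv_div, hβdef]
  rwa [this] at hfin
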